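/- Let G be a finite group of order n with identity e, and let a ∈ G with a ≠ e and a³ = e. Then the coefficient of the monomial x_e^{n-3} x_a³ in the group determinant Θ(G) equals n/3 (in particular 3 divides n). -/

import Mathlib

/-- The group determinant `Θ(G)` of a finite group `G`, as a multivariate polynomial over a
commutative ring `R` in independent commuting variables `x_g` (`g ∈ G`):
`Θ(G) = det((x_{g h⁻¹})_{g,h ∈ G})`. -/
noncomputable def groupDet (R G : Type*) [CommRing R] [Group G] [Finite G] :
    MvPolynomial G R := by
  classical
  letI := Fintype.ofFinite G
  exact Matrix.det (Matrix.of fun g h : G => MvPolynomial.X (g * h⁻¹))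

set_option linter.unusedSectionVars false

open Finset MvPolynomial Equiv

section aux
variable {G : Type*} [Group G] [DecidableEq G]

def cyc (a g : G) : Equiv.Perm G := Equiv.swap g (a*g) * Equiv.swap (a*g) (a*(a*g))

variable {a : G} (ha : a ≠ 1) (haa : a * a ≠ 1) (h3 : ∀ g : G, a * (a * (a * g)) = g)

include ha haa in
lemma cyc_ne (g : G) : g ≠ a * g ∧ a * g ≠ a * (a * g) ∧ g ≠ a * (a * g) := by
  refine ⟨fun h => ha ((mul_eq_right).1 h.symm),
    fun h => ha ((mul_eq_right).1 (mul_left_cancel h).symm),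
    fun h => haa (mul_eq_right.1 (by rw [mul_assoc]; exact h.symm))⟩

noncomputable def dd [Fintype G] (σ : Equiv.Perm G) : G →₀ ℕ :=
  ∑ h : G, Finsupp.single (σ h * h⁻¹) 1

lemma dd_apply [Fintype G] (σ : Equiv.Perm G) (k : G) :
    dd σ k = (univ.filter fun h => σ h * h⁻¹ = k).card := by
  rw [dd, Finsupp.finset_sum_apply, Finset.card_filter]
  simp [Finsupp.single_apply]

include ha haa h3 in
lemma cyc_apply (g h : G) :
    cyc a g h = if h = g ∨ h = a*g ∨ h = a*(a*g) then a * h else h := by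
  obtain ⟨n1, n2, n3⟩ := cyc_ne ha haa g
  by_cases h1 : h = g
  · subst h1
    simp [cyc, Equiv.Perm.mul_apply, Equiv.swap_apply_of_ne_of_ne n1 n3,
      Equiv.swap_apply_left]
  by_cases h2 : h = a * g
  · subst h2
    simp [cyc, Equiv.Perm.mul_apply, Equiv.swap_apply_left,
      Equiv.swap_apply_of_ne_of_ne (Ne.symm n1) n2, n1, Ne.symm n1,
      Equiv.swap_apply_of_ne_of_ne (Ne.symm n3) (Ne.symm n2)]
  by_cases h4 : h = a * (a * g)
  · subst h4
    simp [cyc, Equiv.Perm.mul_apply, Equiv.swap_apply_right, Equiv.swap_apply_left, h3,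
      Ne.symm n3, Ne.symm n2]
  · simp [cyc, Equiv.Perm.mul_apply, Equiv.swap_apply_of_ne_of_ne, h1, h2, h4]

include ha haa h3 in
lemma cyc_shift (g : G) : cyc a (a * g) = cyc a g := by
  ext h
  rw [cyc_apply ha haa h3, cyc_apply ha haa h3]
  refine if_congr ?_ rfl rfl
  rw [h3 g]
  tauto

include ha haa h3 in
lemma cyc_eq_iff (g g₀ : G) :
    cyc a g = cyc a g₀ ↔ g = g₀ ∨ g = a * g₀ ∨ g = a * (a * g₀) := by
  constructor
  · intro h
    have h1 : cyc a g₀ g = a * g := by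
      rw [← h, cyc_apply ha haa h3]
      simp
    rw [cyc_apply ha haa h3] at h1
    by_contra hc
    rw [if_neg hc] at h1
    exact ha (mul_eq_right.1 h1.symm)
  · rintro (rfl | rfl | rfl)
    · rfl
    · exact cyc_shift ha haa h3 g₀
    · rw [cyc_shift ha haa h3, cyc_shift ha haa h3]

include ha haa h3 in
lemma dd_cyc [Fintype G] (g : G) :
    dd (cyc a g) =
      Finsupp.single (1 : G) (Fintype.card G - 3) + Finsupp.single a 3 := by
  obtain ⟨n1, n2, n3⟩ := cyc_ne ha haa g
  set s : Finset G := {g, a*g, a*(a*g)} with hs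
  have hmem : ∀ h : G, h ∈ s ↔ h = g ∨ h = a*g ∨ h = a*(a*g) := by
    intro h; simp [hs]
  have hcs : s.card = 3 := by
    rw [hs, card_insert_of_notMem (by simp [n1, n3]),
      card_insert_of_notMem (by simp [n2]), card_singleton]
  rw [dd, ← Finset.sum_add_sum_compl s]
  have e1 : ∑ h ∈ s, Finsupp.single (cyc a g h * h⁻¹) 1 = Finsupp.single a 3 := by
    rw [Finset.sum_congr rfl (g := fun _ => Finsupp.single a 1) ?_, Finset.sum_const, hcs]
    · ext k; simp [Finsupp.single_apply]
    · intro h hh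
      rw [cyc_apply ha haa h3, if_pos ((hmem h).1 hh), mul_inv_cancel_right]
  have e2 : ∑ h ∈ sᶜ, Finsupp.single (cyc a g h * h⁻¹) 1
      = Finsupp.single (1 : G) (Fintype.card G - 3) := by
    rw [Finset.sum_congr rfl (g := fun _ => Finsupp.single (1:G) 1) ?_, Finset.sum_const,
      Finset.card_compl, hcs]
    · ext k; simp [Finsupp.single_apply]
    · intro h hh
      rw [cyc_apply ha haa h3, if_neg (fun hc => (Finset.mem_compl.1 hh) ((hmem h).2 hc)),
        mul_inv_cancel]
  rw [e1, e2, add_comm]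

include ha haa h3 in
lemma dd_eq_imp [Fintype G] (σ : Equiv.Perm G)
    (hσ : dd σ = Finsupp.single (1 : G) (Fintype.card G - 3) + Finsupp.single a 3) :
    ∃ g, σ = cyc a g := by
  have step1 : ∀ h, σ h = h ∨ σ h = a * h := by
    intro h
    by_contra hc
    push_neg at hc
    have k1 : σ h * h⁻¹ ≠ 1 := fun e => hc.1 (mul_inv_eq_one.1 e)
    have k2 : σ h * h⁻¹ ≠ a := fun e => hc.2 (mul_inv_eq_iff_eq_mul.1 e)
    have hk : (dd σ) (σ h * h⁻¹) = 0 := by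
      simp [hσ, Finsupp.single_apply, Ne.symm k1, Ne.symm k2]
    rw [dd_apply, Finset.card_eq_zero] at hk
    have : h ∈ univ.filter fun x => σ x * x⁻¹ = σ h * h⁻¹ := by simp
    rw [hk] at this
    exact absurd this (Finset.notMem_empty h)
  set T : Finset G := univ.filter fun h => σ h = a * h with hT
  have hTcard : T.card = 3 := by
    have h1 : dd σ a = 3 := by
      rw [hσ, Finsupp.add_apply, Finsupp.single_apply, Finsupp.single_apply,
        if_neg (fun e => ha e.symm), if_pos rfl, zero_add]
    rw [dd_apply] at h1
    rw [hT, ← h1]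
    congr 1
    ext h
    simp [mul_inv_eq_iff_eq_mul]
  have hTne : T.Nonempty := by
    rw [← Finset.card_pos, hTcard]; norm_num
  obtain ⟨g₀, hg₀⟩ := hTne
  rw [hT, Finset.mem_filter] at hg₀
  have hg₀ := hg₀.2
  have hag₀ : σ (a * g₀) = a * (a * g₀) := by
    rcases step1 (a * g₀) with h | h
    · exfalso
      have : σ (a * g₀) = σ g₀ := by rw [h, hg₀]
      exact ha (mul_eq_right.1 (σ.injective this))
    · exact h
  have ha2g₀ : σ (a * (a * g₀)) = a * (a * (a * g₀)) := by
    rcases step1 (a * (a * g₀)) with h | h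
    · exfalso
      have : σ (a * (a * g₀)) = σ (a * g₀) := by rw [h, hag₀]
      exact ha (mul_eq_right.1 (mul_left_cancel (σ.injective this)))
    · exact h
  obtain ⟨n1, n2, n3⟩ := cyc_ne ha haa g₀
  have hsub : ({g₀, a*g₀, a*(a*g₀)} : Finset G) ⊆ T := by
    intro h hh
    simp only [Finset.mem_insert, Finset.mem_singleton] at hh
    rw [hT, Finset.mem_filter]
    rcases hh with rfl | rfl | rfl
    · exact ⟨Finset.mem_univ _, hg₀⟩
    · exact ⟨Finset.mem_univ _, hag₀⟩
    · exact ⟨Finset.mem_univ _, ha2g₀⟩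
  have hcs : ({g₀, a*g₀, a*(a*g₀)} : Finset G).card = 3 := by
    rw [card_insert_of_notMem (by simp [n1, n3]),
      card_insert_of_notMem (by simp [n2]), card_singleton]
  have hTeq : T = ({g₀, a*g₀, a*(a*g₀)} : Finset G) :=
    (Finset.eq_of_subset_of_card_le hsub (by rw [hTcard, hcs])).symm
  refine ⟨g₀, Equiv.ext fun h => ?_⟩
  rw [cyc_apply ha haa h3]
  by_cases hc : h = g₀ ∨ h = a * g₀ ∨ h = a * (a * g₀)
  · rw [if_pos hc]
    have : h ∈ T := hsub (by simp only [Finset.mem_insert, Finset.mem_singleton]; exact hc)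
    rw [hT, Finset.mem_filter] at this
    exact this.2
  · rw [if_neg hc]
    rcases step1 h with h1 | h1
    · exact h1
    · exfalso
      apply hc
      have : h ∈ T := by rw [hT, Finset.mem_filter]; exact ⟨Finset.mem_univ _, h1⟩
      rw [hTeq] at this
      simpa using this

end aux

lemma prod_X_single {ι τ : Type*} [DecidableEq τ] (s : Finset ι) (f : ι → τ) :
    (∏ i ∈ s, (X (f i) : MvPolynomial τ ℂ)) =
      monomial (∑ i ∈ s, Finsupp.single (f i) 1) 1 := by
  induction s using Finset.cons_induction with
  | empty => simp [monomial_zero']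
  | cons i s hi ih => rw [Finset.prod_cons, Finset.sum_cons, ih, X, monomial_mul, one_mul]

lemma det_irrel {G : Type*} (d1 d2 : DecidableEq G) (f1 f2 : Fintype G) {R : Type*} [CommRing R]
    (M : Matrix G G R) : @Matrix.det G d1 f1 R _ M = @Matrix.det G d2 f2 R _ M := by
  cases Subsingleton.elim d1 d2
  cases Subsingleton.elim f1 f2
  rfl

lemma groupDet_eq (G : Type*) [Group G] [Fintype G] [DecidableEq G] :
    groupDet ℂ G = Matrix.det (Matrix.of fun g h : G => MvPolynomial.X (g * h⁻¹)) := by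
  unfold groupDet
  exact det_irrel _ _ _ _ _

/-- If `a ≠ e` and `a³ = e` in a finite group `G` of order `n`, then `3 ∣ n` and the coefficient
of the monomial `x_e^{n-3} x_a³` in the group determinant `Θ(G)` equals `n / 3`. -/
theorem coeff_groupDet_cube {G : Type*} [Group G] [Fintype G]
    (a : G) (ha : a ≠ 1) (ha3 : a ^ 3 = 1) :
    3 ∣ Fintype.card G ∧
      MvPolynomial.coeff
        (Finsupp.single (1 : G) (Fintype.card G - 3) + Finsupp.single a 3)
        (groupDet ℂ G) = (Fintype.card G : ℂ) / 3 := by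
  classical
  have haa : a * a ≠ 1 := by
    intro h
    have := pow_three a
    rw [ha3, h, mul_one] at this
    exact ha this.symm
  have h3 : ∀ g : G, a * (a * (a * g)) = g := by
    intro g
    rw [← mul_assoc, ← mul_assoc, ← pow_three', ha3, one_mul]
  set m : G →₀ ℕ := Finsupp.single (1 : G) (Fintype.card G - 3) + Finsupp.single a 3 with hm
  set S : Finset (Equiv.Perm G) := univ.filter (fun σ => dd σ = m) with hS
  have hmemS : ∀ σ : Equiv.Perm G, σ ∈ S ↔ dd σ = m := by
    intro σ; simp [hS]
  -- fibers of `cyc a` over `S` have cardinality 3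
  have hfib : ∀ σ ∈ S, (univ.filter fun g => cyc a g = σ).card = 3 := by
    intro σ hσ
    obtain ⟨g₀, rfl⟩ := dd_eq_imp ha haa h3 σ ((hmemS σ).1 hσ)
    obtain ⟨n1, n2, n3⟩ := cyc_ne ha haa g₀
    have : (univ.filter fun g => cyc a g = cyc a g₀) = ({g₀, a*g₀, a*(a*g₀)} : Finset G) := by
      ext g
      simp [cyc_eq_iff ha haa h3]
    rw [this, card_insert_of_notMem (by simp [n1, n3]),
      card_insert_of_notMem (by simp [n2]), card_singleton]
  have hcard : Fintype.card G = 3 * S.card := by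
    have := Finset.card_eq_sum_card_fiberwise (f := cyc a) (s := univ) (t := S)
      (fun g _ => (hmemS _).2 (dd_cyc ha haa h3 g))
    rw [Finset.card_univ] at this
    rw [this, Finset.sum_congr rfl hfib, Finset.sum_const, smul_eq_mul, mul_comm]
  refine ⟨⟨S.card, hcard⟩, ?_⟩
  rw [groupDet_eq, Matrix.det_apply]
  have hterm : ∀ σ : Equiv.Perm G,
      (∏ i : G, (Matrix.of fun g h : G => (X (g * h⁻¹) : MvPolynomial G ℂ)) (σ i) i)
        = monomial (dd σ) 1 := by
    intro σ
    rw [dd]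
    exact prod_X_single univ fun i => σ i * i⁻¹
  rw [coeff_sum]
  have hterm2 : ∀ σ : Equiv.Perm G,
      coeff m (Equiv.Perm.sign σ • ∏ i : G,
        (Matrix.of fun g h : G => (X (g * h⁻¹) : MvPolynomial G ℂ)) (σ i) i)
      = if dd σ = m then ((Equiv.Perm.sign σ : ℤ) : ℂ) else 0 := by
    intro σ
    rw [hterm, Units.smul_def, coeff_smul, coeff_monomial]
    simp only [zsmul_eq_mul, mul_ite, mul_one, mul_zero]
  rw [Finset.sum_congr rfl fun σ _ => hterm2 σ, ← Finset.sum_filter, ← hS]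
  have hsign : ∀ σ ∈ S, ((Equiv.Perm.sign σ : ℤ) : ℂ) = 1 := by
    intro σ hσ
    obtain ⟨g₀, rfl⟩ := dd_eq_imp ha haa h3 σ ((hmemS σ).1 hσ)
    obtain ⟨n1, n2, n3⟩ := cyc_ne ha haa g₀
    rw [cyc, map_mul, Equiv.Perm.sign_swap n1, Equiv.Perm.sign_swap n2]
    norm_num
  rw [Finset.sum_congr rfl hsign, Finset.sum_const, nsmul_eq_mul, mul_one, hcard]
  push_cast
  ring
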